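/- Derivative of the rescaled asymptotic mean square error: for α ∈ (0,1) with β = 1−α and p = α p₀ + β p₁, assuming the relevant integrals are finite, the function M(α) = (1/(αβ))(1/U(α) − 1) is differentiable at α with M′(α) = Var₁(p₀/p)/(β² U(α)²) − Var₀(p₁/p)/(α² U(α)²). -/

import Mathlib

open MeasureTheory Real Set

/-- The overlap integral `U(α) = ∫_Ω p₀ p₁ / (α p₀ + (1-α) p₁)`. -/
noncomputable def overlap (Ω : Set ℝ) (p₀ p₁ : ℝ → ℝ) (α : ℝ) : ℝ :=
  ∫ w in Ω, p₀ w * p₁ w / (α * p₀ w + (1 - α) * p₁ w)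

/-- The rescaled asymptotic mean square error `M(α) = (1/(α(1-α)))(1/U(α) - 1)`. -/
noncomputable def mseM (Ω : Set ℝ) (p₀ p₁ : ℝ → ℝ) (α : ℝ) : ℝ :=
  (1 / (α * (1 - α))) * (1 / overlap Ω p₀ p₁ α - 1)

/-- The mean `⟨g⟩_q = ∫_Ω g q` of `g` with respect to the density `q` on `Ω`. -/
noncomputable def wMean (Ω : Set ℝ) (q g : ℝ → ℝ) : ℝ :=
  ∫ w in Ω, g w * q w

/-- The variance `Var_q(g) = ⟨(g - ⟨g⟩_q)²⟩_q` of `g` with respect to the density `q`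
on `Ω`. -/
noncomputable def wVar (Ω : Set ℝ) (q g : ℝ → ℝ) : ℝ :=
  ∫ w in Ω, (g w - wMean Ω q g) ^ 2 * q w

set_option maxHeartbeats 1600000 in
/-- Derivative of the rescaled asymptotic mean square error: for `α ∈ (0,1)` with
`β = 1 - α` and `p = α p₀ + β p₁`, assuming the relevant integrals are finite,
`M(α) = (1/(αβ))(1/U(α) - 1)` is differentiable at `α` with
`M'(α) = Var₁(p₀/p)/(β² U(α)²) - Var₀(p₁/p)/(α² U(α)²)`. -/
theorem mse_hasDerivAt
    (p₀ p₁ : ℝ → ℝ) (Ω : Set ℝ)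
    (hm0 : Measurable p₀) (hm1 : Measurable p₁)
    (hpos0 : ∀ w, 0 ≤ p₀ w) (hpos1 : ∀ w, 0 ≤ p₁ w)
    (hnorm0 : ∫ w, p₀ w = 1) (hnorm1 : ∫ w, p₁ w = 1)
    (hΩ0 : Ω = {w | 0 < p₀ w}) (hΩ1 : Ω = {w | 0 < p₁ w})
    (α : ℝ) (hα : α ∈ Ioo (0:ℝ) 1)
    (hUpos : ∀ a ∈ Ioo (0:ℝ) 1, 0 < overlap Ω p₀ p₁ a)
    (hUint : ∀ a ∈ Ioo (0:ℝ) 1,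
      IntegrableOn (fun w => p₀ w * p₁ w / (a * p₀ w + (1 - a) * p₁ w)) Ω)
    (hU'int : ∀ a ∈ Ioo (0:ℝ) 1, IntegrableOn
      (fun w => p₀ w * p₁ w * (p₁ w - p₀ w) / (a * p₀ w + (1 - a) * p₁ w) ^ 2) Ω)
    (hsq0 : IntegrableOn
      (fun w => (p₁ w / (α * p₀ w + (1 - α) * p₁ w)) ^ 2 * p₀ w) Ω)
    (hsq1 : IntegrableOn
      (fun w => (p₀ w / (α * p₀ w + (1 - α) * p₁ w)) ^ 2 * p₁ w) Ω) :
    HasDerivAt (mseM Ω p₀ p₁)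
      (wVar Ω p₁ (fun w => p₀ w / (α * p₀ w + (1 - α) * p₁ w))
          / ((1 - α) ^ 2 * overlap Ω p₀ p₁ α ^ 2)
        - wVar Ω p₀ (fun w => p₁ w / (α * p₀ w + (1 - α) * p₁ w))
          / (α ^ 2 * overlap Ω p₀ p₁ α ^ 2))
      α := by
  obtain ⟨hα0, hα1⟩ := hα
  have hβ0 : (0:ℝ) < 1 - α := by linarith
  have hαI : α ∈ Ioo (0:ℝ) 1 := ⟨hα0, hα1⟩
  -- measurability of Ω
  have hΩmeas : MeasurableSet Ω := by
    rw [hΩ0]; exact measurableSet_lt measurable_const hm0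
  -- positivity of the mixture on Ω
  have hPpos : ∀ w ∈ Ω, 0 < α * p₀ w + (1 - α) * p₁ w := by
    intro w hw
    have h0 : 0 < p₀ w := by rw [hΩ0] at hw; exact hw
    have h1 : 0 < p₁ w := by rw [hΩ1] at hw; exact hw
    positivity
  -- integrability of densities
  have hint1 : Integrable p₁ := by
    by_contra h; rw [integral_undef h] at hnorm1; norm_num at hnorm1
  have hint0 : Integrable p₀ := by
    by_contra h; rw [integral_undef h] at hnorm0; norm_num at hnorm0
  have hΩint1 : ∫ w in Ω, p₁ w = 1 := by
    rw [setIntegral_eq_integral_of_forall_compl_eq_zero, hnorm1]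
    intro w hw
    rw [hΩ1] at hw
    exact le_antisymm (not_lt.1 hw) (hpos1 w)
  have hΩint0 : ∫ w in Ω, p₀ w = 1 := by
    rw [setIntegral_eq_integral_of_forall_compl_eq_zero, hnorm0]
    intro w hw
    rw [hΩ0] at hw
    exact le_antisymm (not_lt.1 hw) (hpos0 w)
  -- abbreviations
  set U : ℝ := overlap Ω p₀ p₁ α with hUdef
  have hUne : U ≠ 0 := (hUpos α hαI).ne'
  set S₁ : ℝ := ∫ w in Ω, (p₀ w / (α * p₀ w + (1 - α) * p₁ w)) ^ 2 * p₁ w with hS₁def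
  set S₀ : ℝ := ∫ w in Ω, (p₁ w / (α * p₀ w + (1 - α) * p₁ w)) ^ 2 * p₀ w with hS₀def
  set U' : ℝ := ∫ w in Ω,
    p₀ w * p₁ w * (p₁ w - p₀ w) / (α * p₀ w + (1 - α) * p₁ w) ^ 2 with hU'def
  -- Step B : derivative of the overlap integral
  set c : ℝ := min α (1 - α) / 2 with hc
  have hcpos : 0 < c := by
    have := lt_min hα0 hβ0
    positivity
  have hball : ∀ a ∈ Metric.ball α c, c ≤ a ∧ c ≤ 1 - a := by
    intro a ha
    rw [Metric.mem_ball, Real.dist_eq, abs_lt] at ha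
    constructor
    · nlinarith [min_le_left α (1 - α), min_le_right α (1 - α)]
    · nlinarith [min_le_left α (1 - α), min_le_right α (1 - α)]
  have hU'α : IntegrableOn
      (fun w => p₀ w * p₁ w * (p₁ w - p₀ w) / (α * p₀ w + (1 - α) * p₁ w) ^ 2) Ω :=
    hU'int α hαI
  have hUderiv : HasDerivAt (overlap Ω p₀ p₁) U' α := by
    have key := hasDerivAt_integral_of_dominated_loc_of_deriv_le
      (μ := volume.restrict Ω) (x₀ := α)
      (F := fun a w => p₀ w * p₁ w / (a * p₀ w + (1 - a) * p₁ w))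
      (F' := fun a w => p₀ w * p₁ w * (p₁ w - p₀ w) / (a * p₀ w + (1 - a) * p₁ w) ^ 2)
      (bound := fun w =>
        |p₀ w * p₁ w * (p₁ w - p₀ w) / (α * p₀ w + (1 - α) * p₁ w) ^ 2| / c ^ 2)
      (Metric.ball_mem_nhds α hcpos) ?_ ((hUint α hαI)) ?_ ?_ ?_ ?_
    · exact key.2
    · filter_upwards with a
      exact ((hm0.mul hm1).div
        ((measurable_const.mul hm0).add (measurable_const.mul hm1))).aestronglyMeasurable
    · exact ((hm0.mul hm1).mul (hm1.sub hm0) |>.div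
        (((measurable_const.mul hm0).add (measurable_const.mul hm1)).pow_const 2)
        ).aestronglyMeasurable
    · refine (ae_restrict_iff' hΩmeas).2 ?_
      filter_upwards with w hw a ha
      have h0 : 0 < p₀ w := by rw [hΩ0] at hw; exact hw
      have h1 : 0 < p₁ w := by rw [hΩ1] at hw; exact hw
      obtain ⟨hca, hca'⟩ := hball a ha
      have hDa : c * (α * p₀ w + (1 - α) * p₁ w) ≤ a * p₀ w + (1 - a) * p₁ w := by
        nlinarith [mul_le_mul_of_nonneg_right hca (hpos0 w),
          mul_le_mul_of_nonneg_right hca' (hpos1 w),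
          mul_le_mul_of_nonneg_left (show α * p₀ w ≤ p₀ w by nlinarith [hpos0 w]) hcpos.le,
          mul_le_mul_of_nonneg_left (show (1 - α) * p₁ w ≤ p₁ w by nlinarith [hpos1 w]) hcpos.le]
      have hDapos : 0 < a * p₀ w + (1 - a) * p₁ w := by
        have := hPpos w hw
        nlinarith
      have hDα := hPpos w hw
      rw [Real.norm_eq_abs, abs_div, abs_div, abs_of_pos (by positivity : (0:ℝ) <
        (a * p₀ w + (1 - a) * p₁ w) ^ 2), abs_of_pos (by positivity : (0:ℝ) <
        (α * p₀ w + (1 - α) * p₁ w) ^ 2), div_div]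
      refine div_le_div_of_nonneg_left (abs_nonneg _) (by positivity) ?_
      calc (α * p₀ w + (1 - α) * p₁ w) ^ 2 * c ^ 2
          = (c * (α * p₀ w + (1 - α) * p₁ w)) ^ 2 := by ring
        _ ≤ (a * p₀ w + (1 - a) * p₁ w) ^ 2 := by
            have h := mul_pos hcpos hDα
            nlinarith
    · exact (hU'α.abs.div_const _)
    · refine (ae_restrict_iff' hΩmeas).2 ?_
      filter_upwards with w hw a ha
      have h0 : 0 < p₀ w := by rw [hΩ0] at hw; exact hw
      have h1 : 0 < p₁ w := by rw [hΩ1] at hw; exact hw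
      obtain ⟨hca, hca'⟩ := hball a ha
      have hDapos : 0 < a * p₀ w + (1 - a) * p₁ w := by nlinarith
      have hden : HasDerivAt (fun x : ℝ => x * p₀ w + (1 - x) * p₁ w)
          (p₀ w - p₁ w) a := by
        have := ((hasDerivAt_id a).mul_const (p₀ w)).add
          (((hasDerivAt_const a (1:ℝ)).sub (hasDerivAt_id a)).mul_const (p₁ w))
        refine this.congr_deriv ?_
        ring
      have := (hasDerivAt_const a (p₀ w * p₁ w)).div hden hDapos.ne'
      refine this.congr_deriv ?_
      field_simp
      ring
  -- means
  have hmean1 : wMean Ω p₁ (fun w => p₀ w / (α * p₀ w + (1 - α) * p₁ w)) = U := by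
    rw [hUdef]; unfold wMean overlap
    congr 1; funext w; ring
  have hmean0 : wMean Ω p₀ (fun w => p₁ w / (α * p₀ w + (1 - α) * p₁ w)) = U := by
    rw [hUdef]; unfold wMean overlap
    congr 1; funext w; ring
  -- variance expansions
  have hvar1 : wVar Ω p₁ (fun w => p₀ w / (α * p₀ w + (1 - α) * p₁ w)) = S₁ - U ^ 2 := by
    unfold wVar
    rw [hmean1]
    have heq : ∀ w, (p₀ w / (α * p₀ w + (1 - α) * p₁ w) - U) ^ 2 * p₁ w
        = (p₀ w / (α * p₀ w + (1 - α) * p₁ w)) ^ 2 * p₁ w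
          - (2 * U) * (p₀ w * p₁ w / (α * p₀ w + (1 - α) * p₁ w))
          + (U ^ 2) * p₁ w := fun w => by ring
    simp only [heq]
    have hA : IntegrableOn (fun w => (p₀ w / (α * p₀ w + (1 - α) * p₁ w)) ^ 2 * p₁ w
        - 2 * U * (p₀ w * p₁ w / (α * p₀ w + (1 - α) * p₁ w))) Ω :=
      hsq1.sub ((hUint α hαI).const_mul (2 * U))
    have hC : IntegrableOn (fun w => U ^ 2 * p₁ w) Ω := (hint1.integrableOn).const_mul (U ^ 2)
    rw [integral_add hA hC,
      integral_sub hsq1 ((hUint α hαI).const_mul (2 * U)),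
      integral_const_mul, integral_const_mul, hΩint1, ← hS₁def]
    rw [hUdef]; unfold overlap; ring
  have hvar0 : wVar Ω p₀ (fun w => p₁ w / (α * p₀ w + (1 - α) * p₁ w)) = S₀ - U ^ 2 := by
    unfold wVar
    rw [hmean0]
    have heq : ∀ w, (p₁ w / (α * p₀ w + (1 - α) * p₁ w) - U) ^ 2 * p₀ w
        = (p₁ w / (α * p₀ w + (1 - α) * p₁ w)) ^ 2 * p₀ w
          - (2 * U) * (p₀ w * p₁ w / (α * p₀ w + (1 - α) * p₁ w))
          + (U ^ 2) * p₀ w := fun w => by ring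
    simp only [heq]
    have hA : IntegrableOn (fun w => (p₁ w / (α * p₀ w + (1 - α) * p₁ w)) ^ 2 * p₀ w
        - 2 * U * (p₀ w * p₁ w / (α * p₀ w + (1 - α) * p₁ w))) Ω :=
      hsq0.sub ((hUint α hαI).const_mul (2 * U))
    have hC : IntegrableOn (fun w => U ^ 2 * p₀ w) Ω := (hint0.integrableOn).const_mul (U ^ 2)
    rw [integral_add hA hC,
      integral_sub hsq0 ((hUint α hαI).const_mul (2 * U)),
      integral_const_mul, integral_const_mul, hΩint0, ← hS₀def]
    rw [hUdef]; unfold overlap; ring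
  -- identity for U'
  have hU'id : U' = (1 / (1 - α) - 1 / α) * U
      - (α / (1 - α)) * S₁ + ((1 - α) / α) * S₀ := by
    rw [hU'def]
    have heq : EqOn
        (fun w => p₀ w * p₁ w * (p₁ w - p₀ w) / (α * p₀ w + (1 - α) * p₁ w) ^ 2)
        (fun w => (1 / (1 - α) - 1 / α) * (p₀ w * p₁ w / (α * p₀ w + (1 - α) * p₁ w))
          - (α / (1 - α)) * ((p₀ w / (α * p₀ w + (1 - α) * p₁ w)) ^ 2 * p₁ w)
          + ((1 - α) / α) * ((p₁ w / (α * p₀ w + (1 - α) * p₁ w)) ^ 2 * p₀ w)) Ω := by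
      intro w hw
      have hD := (hPpos w hw).ne'
      field_simp
      ring
    rw [setIntegral_congr_fun hΩmeas heq]
    have hA : IntegrableOn (fun w => (1 / (1 - α) - 1 / α) * (p₀ w * p₁ w / (α * p₀ w + (1 - α) * p₁ w))
        - α / (1 - α) * ((p₀ w / (α * p₀ w + (1 - α) * p₁ w)) ^ 2 * p₁ w)) Ω :=
      ((hUint α hαI).const_mul _).sub (hsq1.const_mul _)
    have hC : IntegrableOn (fun w => (1 - α) / α
        * ((p₁ w / (α * p₀ w + (1 - α) * p₁ w)) ^ 2 * p₀ w)) Ω := hsq0.const_mul _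
    rw [integral_add hA hC,
      integral_sub ((hUint α hαI).const_mul _) (hsq1.const_mul _),
      integral_const_mul, integral_const_mul, integral_const_mul,
      ← hS₁def, ← hS₀def, hUdef]
    rfl
  -- assemble the derivative
  have hd2 : HasDerivAt (fun a : ℝ => 1 / (a * (1 - a)))
      (-(1 - 2 * α) / (α * (1 - α)) ^ 2) α := by
    have hden : HasDerivAt (fun a : ℝ => a * (1 - a)) (1 - 2 * α) α := by
      have := (hasDerivAt_id α).mul ((hasDerivAt_const α (1:ℝ)).sub (hasDerivAt_id α))
      refine this.congr_deriv ?_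
      simp only [id_eq, Pi.sub_apply]
      ring
    have := (hasDerivAt_const α (1:ℝ)).div hden (by positivity : α * (1 - α) ≠ 0)
    refine this.congr_deriv ?_
    ring
  have hd3 : HasDerivAt (fun a : ℝ => 1 / overlap Ω p₀ p₁ a - 1)
      (-U' / U ^ 2) α := by
    have := ((hasDerivAt_const α (1:ℝ)).div hUderiv hUne).sub_const 1
    refine this.congr_deriv ?_
    rw [hUdef]
    ring
  have hd := hd2.mul hd3
  have hfun : mseM Ω p₀ p₁ = fun a : ℝ =>
      (1 / (a * (1 - a))) * (1 / overlap Ω p₀ p₁ a - 1) := rfl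
  rw [hfun, hvar1, hvar0]
  refine hd.congr_deriv ?_
  rw [hU'id, ← hUdef]
  have hβne : (1:ℝ) - α ≠ 0 := hβ0.ne'
  field_simp
  ring
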